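/- The sequence a_j = 2csc(π/(2j+6)) − 2csc(π/(2j+2)), j ≥ 0, is strictly increasing. -/

import Mathlib

open Real Set

noncomputable def hh (t : ℝ) : ℝ := t ^ 2 * Real.cos t / Real.sin t ^ 2

lemma hh_hasDerivAt {t : ℝ} (ht : Real.sin t ≠ 0) :
    HasDerivAt hh
      (((2 * t * Real.cos t - t ^ 2 * Real.sin t) * Real.sin t ^ 2
        - t ^ 2 * Real.cos t * (2 * Real.sin t * Real.cos t)) / (Real.sin t ^ 2) ^ 2) t := by
  have hnum : HasDerivAt (fun t : ℝ => t ^ 2 * Real.cos t)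
      (2 * t * Real.cos t - t ^ 2 * Real.sin t) t := by
    have : HasDerivAt (fun t : ℝ => t ^ 2 * Real.cos t) _ t := (hasDerivAt_pow 2 t).mul (Real.hasDerivAt_cos t)
    convert this using 1
    ring
  have hden : HasDerivAt (fun t : ℝ => Real.sin t ^ 2) (2 * Real.sin t * Real.cos t) t := by
    have : HasDerivAt (fun t : ℝ => Real.sin t ^ 2) _ t := (Real.hasDerivAt_sin t).pow 2
    convert this using 1
    ring
  have := hnum.div hden (pow_ne_zero 2 ht)
  exact this

lemma hh_strictAnti : StrictAntiOn hh (Ioc 0 (π / 2)) := by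
  have hconv : Convex ℝ (Ioc (0:ℝ) (π/2)) := convex_Ioc _ _
  apply strictAntiOn_of_deriv_neg hconv
  · intro t ht
    have hsin : Real.sin t ≠ 0 := by
      have h1 : 0 < Real.sin t := Real.sin_pos_of_pos_of_lt_pi ht.1
        (lt_of_le_of_lt ht.2 (by linarith [Real.pi_pos]))
      exact ne_of_gt h1
    exact (hh_hasDerivAt hsin).continuousAt.continuousWithinAt
  · intro t ht
    rw [interior_Ioc] at ht
    have hsinpos : 0 < Real.sin t := Real.sin_pos_of_pos_of_lt_pi ht.1
      (lt_of_lt_of_le ht.2 (by linarith [Real.pi_pos]))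
    have hcospos : 0 < Real.cos t := Real.cos_pos_of_mem_Ioo ⟨by linarith [ht.1, Real.pi_pos], ht.2⟩
    have hsinlt : Real.sin t < t := by
      have := Real.sin_lt ht.1
      linarith
    rw [(hh_hasDerivAt (ne_of_gt hsinpos)).deriv]
    apply div_neg_of_neg_of_pos
    · have key : 2 * t * Real.cos t * Real.sin t
          - t ^ 2 * (Real.sin t ^ 2 + 2 * Real.cos t ^ 2) < 0 := by
        nlinarith [Real.sin_sq_add_cos_sq t, mul_pos (mul_pos ht.1 hcospos) (sub_pos.mpr hsinlt),
          mul_nonneg (sq_nonneg t) (sq_nonneg (1 - Real.cos t))]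
      have hrw : (2 * t * Real.cos t - t ^ 2 * Real.sin t) * Real.sin t ^ 2
          - t ^ 2 * Real.cos t * (2 * Real.sin t * Real.cos t)
          = Real.sin t * (2 * t * Real.cos t * Real.sin t
            - t ^ 2 * (Real.sin t ^ 2 + 2 * Real.cos t ^ 2)) := by ring
      rw [hrw]
      exact mul_neg_of_pos_of_neg hsinpos key
    · positivity

lemma G_hasDerivAt (c : ℝ) (hc : 2 ≤ c) {x : ℝ} (hx : 0 ≤ x) :
    HasDerivAt (fun x : ℝ => 2 / Real.sin (π / (2 * x + c)))
      (4 / π * hh (π / (2 * x + c))) x := by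
  have hd : (0:ℝ) < 2 * x + c := by linarith
  have hπ : 0 < π := Real.pi_pos
  have hu1 : 0 < π / (2 * x + c) := div_pos hπ hd
  have hu2 : π / (2 * x + c) < π := by
    rw [div_lt_iff₀ hd]
    nlinarith
  have hsinpos : 0 < Real.sin (π / (2 * x + c)) := Real.sin_pos_of_pos_of_lt_pi hu1 hu2
  have hinner : HasDerivAt (fun x : ℝ => π / (2 * x + c))
      (π * (-2 / (2 * x + c) ^ 2)) x := by
    have h1 : HasDerivAt (fun x : ℝ => 2 * x + c) 2 x := by
      simpa using ((hasDerivAt_id x).const_mul 2).add_const c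
    have h2 := (h1.inv (ne_of_gt hd)).const_mul π
    simpa [div_eq_mul_inv] using h2
  have hsin : HasDerivAt (fun x : ℝ => Real.sin (π / (2 * x + c)))
      (Real.cos (π / (2 * x + c)) * (π * (-2 / (2 * x + c) ^ 2))) x :=
    (Real.hasDerivAt_sin _).comp x hinner
  have h2 := (hsin.inv (ne_of_gt hsinpos)).const_mul 2
  have heq : 2 * (-(Real.cos (π / (2 * x + c)) * (π * (-2 / (2 * x + c) ^ 2))) /
      Real.sin (π / (2 * x + c)) ^ 2) = 4 / π * hh (π / (2 * x + c)) := by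
    unfold hh
    rw [div_pow]
    field_simp
    ring
  rw [← heq]
  simpa [div_eq_mul_inv] using h2

noncomputable def F (x : ℝ) : ℝ :=
  2 / Real.sin (π / (2 * x + 6)) - 2 / Real.sin (π / (2 * x + 2))

lemma F_hasDerivAt {x : ℝ} (hx : 0 ≤ x) :
    HasDerivAt F (4 / π * hh (π / (2 * x + 6)) - 4 / π * hh (π / (2 * x + 2))) x :=
  (G_hasDerivAt 6 (by norm_num) hx).sub (G_hasDerivAt 2 (by norm_num) hx)

lemma F_strictMono : StrictMonoOn F (Ici 0) := by
  apply strictMonoOn_of_deriv_pos (convex_Ici 0)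
  · intro x hx
    exact (F_hasDerivAt hx).continuousAt.continuousWithinAt
  · intro x hx
    rw [interior_Ici] at hx
    have hx0 : (0:ℝ) ≤ x := le_of_lt hx
    rw [(F_hasDerivAt hx0).deriv]
    have hπ : 0 < π := Real.pi_pos
    have h2 : (0:ℝ) < 2 * x + 2 := by linarith
    have h6 : (0:ℝ) < 2 * x + 6 := by linarith
    have hu : π / (2 * x + 6) < π / (2 * x + 2) :=
      div_lt_div_of_pos_left hπ h2 (by linarith)
    have hmemu : π / (2 * x + 6) ∈ Ioc 0 (π / 2) := by
      constructor
      · exact div_pos hπ h6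
      · rw [div_le_div_iff₀ h6 (by norm_num)]
        nlinarith
    have hmemv : π / (2 * x + 2) ∈ Ioc 0 (π / 2) := by
      constructor
      · exact div_pos hπ h2
      · rw [div_le_div_iff₀ h2 (by norm_num)]
        nlinarith
    have := hh_strictAnti hmemu hmemv hu
    have h4π : 0 < 4 / π := by positivity
    nlinarith

theorem a_strictMono :
    StrictMono
      (fun j : ℕ => 2 / Real.sin (π / (2 * j + 6)) - 2 / Real.sin (π / (2 * j + 2))) := by
  intro j k hjk
  have h := F_strictMono (Set.mem_Ici.mpr (Nat.cast_nonneg j))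
    (Set.mem_Ici.mpr (Nat.cast_nonneg k)) (by exact_mod_cast hjk)
  simpa [F] using h
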